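/- Let φ : R^d → R be a convex function whose subdifferential ∂φ pushes a probability measure P with everywhere positive density forward to the spherical uniform U_d, in the sense that ∂φ(R^d) ⊇ ∇φ(R^d) covers U_d-almost all of B_d. Let u ∈ S^{d-1}, let t_n → ∞, and let y_n ∈ ∂φ(t_n u). Then y_n → u. -/

import Mathlib

open Metric MeasureTheory
open RealInnerProductSpace

set_option maxHeartbeats 1000000 in
/-- Asymptotic invariance: if `φ : ℝ^d → ℝ` is convex and 1-Lipschitz and its
subdifferential image `∂φ(ℝ^d)` covers almost all of the unit ball, then for any unit
vector `u`, any `t_n → ∞` and any subgradients `y_n ∈ ∂φ(t_n u)`, one has `y_n → u`. -/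
theorem subgradients_along_ray_tendsto (d : ℕ)
    (φ : EuclideanSpace ℝ (Fin d) → ℝ)
    (hconv : ConvexOn ℝ Set.univ φ) (hlip : LipschitzWith 1 φ)
    (hcover : volume (ball (0 : EuclideanSpace ℝ (Fin d)) 1 \
      ⋃ x : EuclideanSpace ℝ (Fin d),
        {z : EuclideanSpace ℝ (Fin d) | ∀ w, φ x + ⟪z, w - x⟫ ≤ φ w}) = 0)
    (u : EuclideanSpace ℝ (Fin d)) (hu : ‖u‖ = 1)
    (t : ℕ → ℝ) (ht : Filter.Tendsto t Filter.atTop Filter.atTop)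
    (y : ℕ → EuclideanSpace ℝ (Fin d))
    (hy : ∀ n, ∀ w, φ (t n • u) + ⟪y n, w - t n • u⟫ ≤ φ w) :
    Filter.Tendsto y Filter.atTop (nhds u) := by
  -- Step 1: all subgradients have norm at most 1.
  have hnorm : ∀ n, ‖y n‖ ≤ 1 := by
    intro n
    have h1 := hy n (t n • u + y n)
    have hsimp : (t n • u + y n) - t n • u = y n := by abel
    rw [hsimp] at h1
    have h3 : φ (t n • u + y n) - φ (t n • u) ≤ ‖y n‖ := by
      have hd := hlip.dist_le_mul (t n • u + y n) (t n • u)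
      have hdd : dist (t n • u + y n) (t n • u) = ‖y n‖ := by
        rw [dist_eq_norm, add_sub_cancel_left]
      rw [hdd] at hd
      have := le_abs_self (φ (t n • u + y n) - φ (t n • u))
      rw [← Real.dist_eq] at this
      simpa using this.trans hd
    have h4 : ‖y n‖ ^ 2 ≤ ‖y n‖ := by
      rw [← real_inner_self_eq_norm_sq]; linarith
    nlinarith [norm_nonneg (y n)]
  rw [Metric.tendsto_atTop]
  intro ε hε
  set δ : ℝ := min (ε ^ 2 / 2) 2 with hδdef
  have hδ0 : 0 < δ := lt_min (by positivity) (by norm_num)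
  have hδ2 : δ ≤ 2 := min_le_right _ _
  have hδε : δ ≤ ε ^ 2 / 2 := min_le_left _ _
  -- Step 2: find a subgradient z close to (1 - δ/4) • u, by a.e. coverage of the ball.
  obtain ⟨z, hzball, x, hx⟩ : ∃ z ∈ ball ((1 - δ/4) • u) (δ/4),
      ∃ x, ∀ w, φ x + ⟪z, w - x⟫ ≤ φ w := by
    by_contra hcon
    have hsub : ball ((1 - δ/4) • u) (δ/4) ⊆ ball (0 : EuclideanSpace ℝ (Fin d)) 1 \
        ⋃ x : EuclideanSpace ℝ (Fin d),
          {z : EuclideanSpace ℝ (Fin d) | ∀ w, φ x + ⟪z, w - x⟫ ≤ φ w} := by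
      intro z hz
      refine ⟨?_, ?_⟩
      · have h1 : ‖z - (1 - δ/4) • u‖ < δ/4 := mem_ball_iff_norm.mp hz
        have h2 : ‖(1 - δ/4) • u‖ = 1 - δ/4 := by
          rw [norm_smul, hu, mul_one, Real.norm_eq_abs, abs_of_nonneg (by linarith)]
        have h3 : ‖z‖ < 1 := by
          calc ‖z‖ = ‖(z - (1 - δ/4) • u) + (1 - δ/4) • u‖ := by congr 1; abel
            _ ≤ ‖z - (1 - δ/4) • u‖ + ‖(1 - δ/4) • u‖ := norm_add_le _ _
            _ < δ/4 + (1 - δ/4) := by rw [h2]; linarith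
            _ = 1 := by ring
        simpa [mem_ball, dist_eq_norm] using h3
      · intro hmem
        rw [Set.mem_iUnion] at hmem
        obtain ⟨x, hx⟩ := hmem
        exact hcon ⟨z, hz, x, hx⟩
    have hle := measure_mono (μ := volume) hsub
    rw [hcover] at hle
    have hpos : 0 < volume (ball ((1 - δ/4) • u) (δ/4)) :=
      measure_ball_pos volume _ (by positivity)
    exact absurd (le_antisymm hle zero_le) hpos.ne'
  -- Basic facts about z.
  have hzdist : ‖z - (1 - δ/4) • u‖ < δ/4 := mem_ball_iff_norm.mp hzball
  have hcu : ‖(1 - δ/4) • u‖ = 1 - δ/4 := by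
    rw [norm_smul, hu, mul_one, Real.norm_eq_abs, abs_of_nonneg (by linarith)]
  have hznorm : ‖z‖ ≤ 1 := by
    calc ‖z‖ = ‖(z - (1 - δ/4) • u) + (1 - δ/4) • u‖ := by congr 1; abel
      _ ≤ ‖z - (1 - δ/4) • u‖ + ‖(1 - δ/4) • u‖ := norm_add_le _ _
      _ ≤ δ/4 + (1 - δ/4) := by rw [hcu]; linarith
      _ = 1 := by ring
  have huu : ⟪u, u⟫ = 1 := by
    rw [real_inner_self_eq_norm_sq, hu]; norm_num
  have hzu : (1 : ℝ) - δ/2 < ⟪z, u⟫ := by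
    have h2 : |⟪z - (1 - δ/4) • u, u⟫| ≤ ‖z - (1 - δ/4) • u‖ * ‖u‖ :=
      abs_real_inner_le_norm _ _
    rw [hu, mul_one] at h2
    have h3 : ⟪z - (1 - δ/4) • u, u⟫ = ⟪z, u⟫ - (1 - δ/4) * ⟪u, u⟫ := by
      rw [inner_sub_left, real_inner_smul_left]
    rw [huu, mul_one] at h3
    have h4 := (abs_le.mp h2).1
    linarith
  -- Step 3: choose N so t n is large.
  obtain ⟨N, hN⟩ := Filter.eventually_atTop.mp
    (ht.eventually_ge_atTop (max 1 (8 * ‖x‖ / δ)))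
  refine ⟨N, fun n hn => ?_⟩
  have htn := hN n hn
  have htn1 : (1 : ℝ) ≤ t n := le_trans (le_max_left _ _) htn
  have htnx : 8 * ‖x‖ / δ ≤ t n := le_trans (le_max_right _ _) htn
  have htnpos : (0 : ℝ) < t n := lt_of_lt_of_le one_pos htn1
  have h8 : 8 * ‖x‖ ≤ t n * δ := by
    rw [div_le_iff₀ hδ0] at htnx; linarith
  -- Step 4: monotonicity of the subdifferential.
  have h1 := hy n x
  have h2 := hx (t n • u)
  have hneg : ⟪z, t n • u - x⟫ = - ⟪z, x - t n • u⟫ := by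
    rw [← inner_neg_right]; congr 1; abel
  have hkey : ⟪y n, x - t n • u⟫ - ⟪z, x - t n • u⟫ ≤ 0 := by
    rw [hneg] at h2; linarith
  have hexp1 : ⟪y n, x - t n • u⟫ - ⟪z, x - t n • u⟫
      = (⟪y n, x⟫ - ⟪z, x⟫) - t n * (⟪y n, u⟫ - ⟪z, u⟫) := by
    rw [inner_sub_right, inner_sub_right, real_inner_smul_right, real_inner_smul_right]
    ring
  rw [hexp1] at hkey
  have hCS : |⟪y n - z, x⟫| ≤ ‖y n - z‖ * ‖x‖ := abs_real_inner_le_norm _ _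
  have hyz : ‖y n - z‖ ≤ 2 := by
    calc ‖y n - z‖ ≤ ‖y n‖ + ‖z‖ := norm_sub_le _ _
      _ ≤ 2 := by linarith [hnorm n]
  have hCS2 : -(2 * ‖x‖) ≤ ⟪y n, x⟫ - ⟪z, x⟫ := by
    have h5 : ⟪y n - z, x⟫ = ⟪y n, x⟫ - ⟪z, x⟫ := inner_sub_left _ _ _
    have h6 := (abs_le.mp hCS).1
    rw [h5] at h6
    nlinarith [norm_nonneg x, norm_nonneg (y n - z)]
  -- combine: t n * (⟪y n, u⟫ - ⟪z, u⟫) ≥ -2‖x‖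
  have hA : -(2 * ‖x‖) ≤ t n * (⟪y n, u⟫ - ⟪z, u⟫) := by linarith
  have hs : 0 ≤ ⟪y n, u⟫ - ⟪z, u⟫ + δ/4 := by
    by_contra h
    push_neg at h
    nlinarith [mul_pos htnpos (neg_pos.mpr h)]
  have hyu : 1 - δ < ⟪y n, u⟫ := by linarith
  -- Step 5: conclude.
  have hexp : ‖y n - u‖ ^ 2 = ‖y n‖ ^ 2 - 2 * ⟪y n, u⟫ + ‖u‖ ^ 2 :=
    norm_sub_sq_real _ _
  rw [hu] at hexp
  have hy2 : ‖y n‖ ^ 2 ≤ 1 := by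
    have := pow_le_one₀ (norm_nonneg (y n)) (hnorm n) (n := 2)
    simpa using this
  have hsq : ‖y n - u‖ ^ 2 < ε ^ 2 := by
    rw [hexp]; linarith
  rw [dist_eq_norm]
  exact lt_of_pow_lt_pow_left₀ 2 hε.le hsq
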